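/- Let t ≥ 2 and h be integers with 1 ≤ h < t, let m ≥ 6 be even, let M be a perfect matching of K_m, and let S be a set of vertices of K_m with |S| = s ≥ 5 containing four distinct vertices w_1, w_2, w_3, w_4 with {w_1, w_2} ∈ M and {w_3, w_4} ∈ M. In the t-subdivided prism G of K_m, define the handle H = {u_w^1 : w ∈ S} ∪ {u_{w_1}^j, u_{w_3}^j : 2 ≤ j ≤ t} ∪ {u_w^j : w ∈ S \ {w_1, w_3}, 2 ≤ j ≤ h} and, for each w ∈ S \ {w_1, w_3}, the tooth T_w = {u_w^j : 1 ≤ j ≤ t}. Then for every Hamiltonian cycle T of G that contains all bottom copies of the edges of M, all vertical edges of G, and the top edge (u_{w_1}^t, u_{w_3}^t), one has |δ(H) ∩ E(T)| = |δ(S) ∩ M| + (s − 2), and |δ(T_w) ∩ E(T)| = 2 for every w ∈ S \ {w_1, w_3}. -/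

import Mathlib

open SimpleGraph Finset

attribute [local instance] Classical.propDecidable

/-- An edge `e` crosses the vertex set `S` if it has an endpoint in `S`
and an endpoint outside `S`. -/
def crossing {V : Type*} (S : Finset V) (e : Sym2 V) : Prop :=
  (∃ a ∈ e, a ∈ S) ∧ (∃ a ∈ e, a ∉ S)

/-- A comb with handle `H` and teeth `T 0, …, T (k-1)`. -/
def IsComb {V : Type*} [Fintype V] [DecidableEq V]
    (H : Finset V) {k : ℕ} (T : Fin k → Finset V) : Prop :=
  3 ≤ k ∧ Odd k ∧
  (∀ i j, i ≠ j → Disjoint (T i) (T j)) ∧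
  (∀ i, (H ∩ T i).Nonempty) ∧
  (H \ Finset.univ.biUnion T).Nonempty

/-- An `(h,t)`-uniform comb: every tooth has size `t` and meets the handle
in exactly `h` vertices. -/
def IsUniformComb {V : Type*} [Fintype V] [DecidableEq V] (h t : ℕ)
    (H : Finset V) {k : ℕ} (T : Fin k → Finset V) : Prop :=
  IsComb H T ∧ ∀ i, (T i).card = t ∧ (H ∩ T i).card = h

/-- The `t`-subdivided prism over `K_m`: vertex `(i, j)` is the copy of
vertex `i` in layer `j` (layer `0` is the bottom, layer `t-1` the top).
There are complete graphs on the bottom and top layers, and vertical paths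
joining consecutive layers in each column. -/
def subPrism (m t : ℕ) : SimpleGraph (Fin m × Fin t) :=
  SimpleGraph.fromRel (fun p q =>
    (p.2.val = 0 ∧ q.2.val = 0 ∧ p.1 ≠ q.1) ∨
    (p.2.val = t - 1 ∧ q.2.val = t - 1 ∧ p.1 ≠ q.1) ∨
    (p.1 = q.1 ∧ p.2.val + 1 = q.2.val))

/-- A perfect matching of `K_m`, given as a set of (non-loop) edges such that
every vertex belongs to exactly one of them. -/
def IsPerfectMatchingKm (m : ℕ) (M : Finset (Sym2 (Fin m))) : Prop :=
  (∀ e ∈ M, ¬ e.IsDiag) ∧ ∀ v : Fin m, ∃! e, e ∈ M ∧ v ∈ e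

/-! ### Auxiliary lemmas -/

lemma path_countP_endpoint {V : Type*} {G : SimpleGraph V} [DecidableEq V] :
    ∀ {u v : V} (q : G.Walk u v), q.IsPath → v ≠ u →
      q.edges.countP (fun e => v ∈ e) = 1 := by
  intro u v q
  induction q with
  | nil => intro _ hne; exact absurd rfl hne
  | @cons u w v hadj q ih =>
    intro hp hne
    rw [SimpleGraph.Walk.cons_isPath_iff] at hp
    by_cases hvw : v = w
    · subst hvw
      have : q = SimpleGraph.Walk.nil := (SimpleGraph.Walk.isPath_iff_eq_nil (p := q)).mp hp.1
      subst this
      simp [hadj.ne']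
    · have : q.edges.countP (fun e => v ∈ e) = 1 := ih hp.1 hvw
      rw [Walk.edges_cons, List.countP_cons, this]
      simp [Sym2.mem_iff, hne, hvw]

lemma cycle_countP {V : Type*} {G : SimpleGraph V} [DecidableEq V] {v : V}
    {p : G.Walk v v} (hp : p.IsCycle) {x : V} (hx : x ∈ p.support) :
    p.edges.countP (fun e => x ∈ e) = 2 := by
  have hrot : ((p.rotate x hx).edges).countP (fun e => x ∈ e)
      = p.edges.countP (fun e => x ∈ e) :=
    (p.rotate_edges x hx).perm.countP_eq _
  rw [← hrot]
  generalize hq : p.rotate x hx = c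
  have hc : c.IsCycle := hq ▸ hp.rotate hx
  clear hq hrot hx hp
  cases c with
  | nil => exact absurd rfl hc.ne_nil
  | @cons _ u _ hadj q =>
    rw [SimpleGraph.Walk.cons_isCycle_iff] at hc
    rw [Walk.edges_cons, List.countP_cons, path_countP_endpoint q hc.1 hadj.ne'.symm]
    simp

lemma cycle_filter_card {V : Type*} {G : SimpleGraph V} [DecidableEq V] {v : V}
    {p : G.Walk v v} (hp : p.IsCycle) {x : V} (hx : x ∈ p.support) :
    (p.edges.toFinset.filter (fun e => x ∈ e)).card = 2 := by
  have hnd : p.edges.Nodup := hp.edges_nodup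
  rw [← cycle_countP hp hx, List.countP_eq_length_filter]
  classical
  rw [← List.toFinset_card_of_nodup (hnd.filter _), List.toFinset_filter]
  congr 1
  simp

lemma cycle_two_incident {V : Type*} {G : SimpleGraph V} [DecidableEq V] {v : V}
    {p : G.Walk v v} (hp : p.IsCycle) {x : V} (hx : x ∈ p.support)
    {e₁ e₂ : Sym2 V} (h₁ : e₁ ∈ p.edges) (h₂ : e₂ ∈ p.edges)
    (hx₁ : x ∈ e₁) (hx₂ : x ∈ e₂) (hne : e₁ ≠ e₂) :
    ∀ e ∈ p.edges, x ∈ e → e = e₁ ∨ e = e₂ := by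
  intro e he hxe
  have hsub : ({e₁, e₂} : Finset (Sym2 V)) ⊆ p.edges.toFinset.filter (fun e => x ∈ e) := by
    intro f hf
    simp only [Finset.mem_insert, Finset.mem_singleton] at hf
    rcases hf with rfl | rfl <;> simp [List.mem_toFinset, *]
  have hcard : ({e₁, e₂} : Finset (Sym2 V)).card = 2 := Finset.card_pair hne
  have := Finset.eq_of_subset_of_card_le hsub (by rw [cycle_filter_card hp hx, hcard])
  have he' : e ∈ ({e₁, e₂} : Finset (Sym2 V)) := by
    rw [this]; simp [List.mem_toFinset, he, hxe]
  simpa using he'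

lemma cycle_exists_other {V : Type*} {G : SimpleGraph V} [DecidableEq V] {v : V}
    {p : G.Walk v v} (hp : p.IsCycle) {x : V} (hx : x ∈ p.support)
    {e₁ : Sym2 V} (h₁ : e₁ ∈ p.edges) (hx₁ : x ∈ e₁) :
    ∃ e₂ ∈ p.edges, x ∈ e₂ ∧ e₂ ≠ e₁ := by
  have hcard : (p.edges.toFinset.filter (fun e => x ∈ e)).card = 2 := cycle_filter_card hp hx
  obtain ⟨e₂, he₂, hne⟩ := Finset.exists_mem_ne
    (s := p.edges.toFinset.filter (fun e => x ∈ e)) (by rw [hcard]; norm_num) e₁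
  simp only [Finset.mem_filter, List.mem_toFinset] at he₂
  exact ⟨e₂, he₂.1, he₂.2, hne⟩

lemma prodEq {α : Type*} {t : ℕ} {a b : α} {j k : Fin t}
    (hh : ((a, j) : α × Fin t) = (b, k)) : a = b ∧ j.val = k.val :=
  ⟨congrArg Prod.fst hh, congrArg (fun y : α × Fin t => y.2.val) hh⟩

lemma crossing_pair_iff {V : Type*} (P : Finset V) (x y : V) :
    crossing P s(x, y) ↔ (x ∈ P ∨ y ∈ P) ∧ (x ∉ P ∨ y ∉ P) := by
  constructor
  · rintro ⟨⟨a, ha, haP⟩, ⟨b, hb, hbP⟩⟩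
    rw [Sym2.mem_iff] at ha hb
    constructor
    · rcases ha with rfl | rfl
      exacts [Or.inl haP, Or.inr haP]
    · rcases hb with rfl | rfl
      exacts [Or.inl hbP, Or.inr hbP]
  · rintro ⟨h1, h2⟩
    constructor
    · rcases h1 with hh | hh
      exacts [⟨x, by simp, hh⟩, ⟨y, by simp, hh⟩]
    · rcases h2 with hh | hh
      exacts [⟨x, by simp, hh⟩, ⟨y, by simp, hh⟩]

lemma subPrism_edge_cases {m t : ℕ} (ht : 2 ≤ t) {e : Sym2 (Fin m × Fin t)}
    (he : e ∈ (subPrism m t).edgeSet) :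
    (∃ a b : Fin m, a ≠ b ∧
        e = s(((a, ⟨0, by omega⟩) : Fin m × Fin t), (b, ⟨0, by omega⟩))) ∨
    (∃ a b : Fin m, a ≠ b ∧
        e = s(((a, ⟨t - 1, by omega⟩) : Fin m × Fin t), (b, ⟨t - 1, by omega⟩))) ∨
    (∃ (i : Fin m) (j : ℕ) (hj : j + 1 < t),
        e = s(((i, ⟨j, by omega⟩) : Fin m × Fin t), (i, ⟨j + 1, hj⟩))) := by
  induction e using Sym2.ind with
  | _ p q =>
    rw [SimpleGraph.mem_edgeSet, subPrism, SimpleGraph.fromRel_adj] at he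
    obtain ⟨hpq, hrel⟩ := he
    have hcases : (p.2.val = 0 ∧ q.2.val = 0 ∧ p.1 ≠ q.1) ∨
        (p.2.val = t - 1 ∧ q.2.val = t - 1 ∧ p.1 ≠ q.1) ∨
        (p.1 = q.1 ∧ p.2.val + 1 = q.2.val) ∨
        (q.1 = p.1 ∧ q.2.val + 1 = p.2.val) := by tauto
    obtain ⟨p1, p2⟩ := p
    obtain ⟨q1, q2⟩ := q
    have hp2 := p2.isLt
    have hq2 := q2.isLt
    dsimp only at hcases
    rcases hcases with ⟨h1, h2, h3⟩ | ⟨h1, h2, h3⟩ | ⟨h1, h2⟩ | ⟨h1, h2⟩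
    · refine Or.inl ⟨p1, q1, h3, ?_⟩
      rw [Sym2.eq_iff]
      exact Or.inl ⟨Prod.ext rfl (Fin.ext h1), Prod.ext rfl (Fin.ext h2)⟩
    · refine Or.inr (Or.inl ⟨p1, q1, h3, ?_⟩)
      rw [Sym2.eq_iff]
      exact Or.inl ⟨Prod.ext rfl (Fin.ext h1), Prod.ext rfl (Fin.ext h2)⟩
    · refine Or.inr (Or.inr ⟨p1, p2.val, by omega, ?_⟩)
      rw [Sym2.eq_iff]
      exact Or.inl ⟨Prod.ext rfl rfl, Prod.ext h1.symm (Fin.ext h2.symm)⟩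
    · refine Or.inr (Or.inr ⟨q1, q2.val, by omega, ?_⟩)
      rw [Sym2.eq_swap, Sym2.eq_iff]
      exact Or.inl ⟨Prod.ext rfl rfl, Prod.ext h1.symm (Fin.ext h2.symm)⟩

set_option maxHeartbeats 2000000 in
theorem handle_and_teeth_crossing_counts (h t m : ℕ)
    (hh : 1 ≤ h) (hht : h < t) (ht : 2 ≤ t) (hm : 6 ≤ m) (hme : Even m)
    (M : Finset (Sym2 (Fin m))) (hM : IsPerfectMatchingKm m M)
    (S : Finset (Fin m)) (hS5 : 5 ≤ S.card)
    (w₁ w₂ w₃ w₄ : Fin m)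
    (hw : w₁ ∈ S ∧ w₂ ∈ S ∧ w₃ ∈ S ∧ w₄ ∈ S)
    (hdist : w₁ ≠ w₂ ∧ w₁ ≠ w₃ ∧ w₁ ≠ w₄ ∧ w₂ ≠ w₃ ∧ w₂ ≠ w₄ ∧ w₃ ≠ w₄)
    (h12 : s(w₁, w₂) ∈ M) (h34 : s(w₃, w₄) ∈ M)
    -- The handle: the bottom copy of `S`, the full columns of `w₁` and `w₃`,
    -- and layers `1, …, h-1` of the columns of the other vertices of `S`.
    (H : Finset (Fin m × Fin t))
    (hH : H = Finset.univ.filter (fun p : Fin m × Fin t =>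
      (p.1 ∈ S ∧ p.2.val = 0) ∨
      ((p.1 = w₁ ∨ p.1 = w₃) ∧ 1 ≤ p.2.val) ∨
      (p.1 ∈ S ∧ p.1 ≠ w₁ ∧ p.1 ≠ w₃ ∧ 1 ≤ p.2.val ∧ p.2.val < h)))
    -- The tooth of `w`: the full column of `w`.
    (Tooth : Fin m → Finset (Fin m × Fin t))
    (hTooth : ∀ w : Fin m, Tooth w = Finset.univ.filter (fun p => p.1 = w)) :
    ∀ (v : Fin m × Fin t) (C : (subPrism m t).Walk v v),
      C.IsHamiltonianCycle →
      (∀ a b : Fin m, s(a, b) ∈ M →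
        s(((a, ⟨0, by omega⟩) : Fin m × Fin t), (b, ⟨0, by omega⟩)) ∈ C.edges) →
      (∀ (i : Fin m) (j : ℕ) (hj : j + 1 < t),
        s(((i, ⟨j, by omega⟩) : Fin m × Fin t), (i, ⟨j + 1, hj⟩)) ∈ C.edges) →
      s(((w₁, ⟨t - 1, by omega⟩) : Fin m × Fin t), (w₃, ⟨t - 1, by omega⟩)) ∈ C.edges →
      (C.edges.toFinset.filter (crossing H)).card =
          (M.filter (crossing S)).card + (S.card - 2) ∧
        ∀ w ∈ S \ {w₁, w₃},
          (C.edges.toFinset.filter (crossing (Tooth w))).card = 2 := by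
  obtain ⟨hw1S, hw2S, hw3S, hw4S⟩ := hw
  obtain ⟨hd12, hd13, hd14, hd23, hd24, hd34⟩ := hdist
  intro v C hC hMb hV hT
  classical
  have hcyc := hC.isCycle
  have hsup : ∀ x : Fin m × Fin t, x ∈ C.support := fun x => hC.mem_support x
  have hedge : ∀ {e}, e ∈ C.edges → e ∈ (subPrism m t).edgeSet :=
    fun he => C.edges_subset_edgeSet he
  -- matching partner
  have hMpart : ∀ a : Fin m, ∃ b, b ≠ a ∧ s(a, b) ∈ M ∧ ∀ e ∈ M, a ∈ e → e = s(a, b) := by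
    intro a
    obtain ⟨e, ⟨heM, hae⟩, huniq⟩ := hM.2 a
    obtain ⟨b, rfl⟩ := Sym2.mem_iff_exists.mp hae
    refine ⟨b, fun hba => hM.1 _ heM (by rw [hba]; exact Sym2.mk_isDiag_iff.mpr rfl), heM,
      fun e' he' hae' => huniq e' ⟨he', hae'⟩⟩
  -- vertical edges, general form
  have hVert : ∀ (i : Fin m) (j k : ℕ) (hj : j < t) (hk : k < t), k = j + 1 →
      s(((i, ⟨j, hj⟩) : Fin m × Fin t), (i, ⟨k, hk⟩)) ∈ C.edges := by
    intro i j k hj hk hkj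
    subst hkj
    exact hV i j hk
  -- every bottom edge of C is (the bottom copy of) an edge of M
  have hbot : ∀ a b : Fin m,
      s(((a, ⟨0, by omega⟩) : Fin m × Fin t), (b, ⟨0, by omega⟩)) ∈ C.edges →
      s(a, b) ∈ M := by
    intro a b he
    obtain ⟨p, hpa, hpM, hpuniq⟩ := hMpart a
    have hev : s(((a, ⟨0, by omega⟩) : Fin m × Fin t), (a, ⟨1, by omega⟩)) ∈ C.edges :=
      hVert a 0 1 (by omega) (by omega) rfl
    have heM : s(((a, ⟨0, by omega⟩) : Fin m × Fin t), (p, ⟨0, by omega⟩)) ∈ C.edges :=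
      hMb a p hpM
    have hne2 : s(((a, ⟨0, by omega⟩) : Fin m × Fin t), (a, ⟨1, by omega⟩)) ≠
        s(((a, ⟨0, by omega⟩) : Fin m × Fin t), (p, ⟨0, by omega⟩)) := by
      rw [Ne, Sym2.eq_iff]
      rintro (⟨-, h2⟩ | ⟨-, h2⟩)
      · have h' : (1 : ℕ) = 0 := (prodEq h2).2; omega
      · have h' : (1 : ℕ) = 0 := (prodEq h2).2; omega
    rcases cycle_two_incident hcyc (hsup _) hev heM (by rw [Sym2.mem_iff]; left; rfl)
        (by rw [Sym2.mem_iff]; left; rfl) hne2 _ he (by rw [Sym2.mem_iff]; left; rfl)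
      with hcon | heq
    · exfalso
      rcases Sym2.eq_iff.mp hcon with ⟨-, h2⟩ | ⟨h1, -⟩
      · have h' : (0 : ℕ) = 1 := (prodEq h2).2; omega
      · have h' : (0 : ℕ) = 1 := (prodEq h1).2; omega
    · rcases Sym2.eq_iff.mp heq with ⟨-, h2⟩ | ⟨h1, -⟩
      · obtain rfl : b = p := (prodEq h2).1
        exact hpM
      · exact absurd ((prodEq h1).1).symm hpa
  -- uniqueness of the top edge at w₁ and w₃
  have htopC : ∀ e ∈ C.edges, ∀ x : Fin m, (x = w₁ ∨ x = w₃) →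
      ((x, ⟨t - 1, by omega⟩) : Fin m × Fin t) ∈ e →
      e = s(((w₁, ⟨t - 1, by omega⟩) : Fin m × Fin t), (w₃, ⟨t - 1, by omega⟩)) ∨
      e = s(((x, ⟨t - 2, by omega⟩) : Fin m × Fin t), (x, ⟨t - 1, by omega⟩)) := by
    intro e he x hx hxe
    have hev : s(((x, ⟨t - 2, by omega⟩) : Fin m × Fin t), (x, ⟨t - 1, by omega⟩)) ∈ C.edges :=
      hVert x (t - 2) (t - 1) (by omega) (by omega) (by omega)
    have hxT : ((x, ⟨t - 1, by omega⟩) : Fin m × Fin t) ∈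
        s(((w₁, ⟨t - 1, by omega⟩) : Fin m × Fin t), (w₃, ⟨t - 1, by omega⟩)) := by
      rw [Sym2.mem_iff]
      rcases hx with rfl | rfl
      · left; rfl
      · right; rfl
    have hne2 : s(((w₁, ⟨t - 1, by omega⟩) : Fin m × Fin t), (w₃, ⟨t - 1, by omega⟩)) ≠
        s(((x, ⟨t - 2, by omega⟩) : Fin m × Fin t), (x, ⟨t - 1, by omega⟩)) := by
      rw [Ne, Sym2.eq_iff]
      rintro (⟨h1, -⟩ | ⟨-, h2⟩)
      · have h' : t - 1 = t - 2 := (prodEq h1).2; omega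
      · have h' : t - 1 = t - 2 := (prodEq h2).2; omega
    exact cycle_two_incident hcyc (hsup _) hT hev hxT
      (by rw [Sym2.mem_iff]; right; rfl) hne2 e he hxe
  -- membership in the handle
  have hHmem : ∀ (a : Fin m) (j : Fin t), (((a, j) : Fin m × Fin t) ∈ H) ↔
      ((a ∈ S ∧ j.val = 0) ∨ ((a = w₁ ∨ a = w₃) ∧ 1 ≤ j.val) ∨
       (a ∈ S ∧ a ≠ w₁ ∧ a ≠ w₃ ∧ 1 ≤ j.val ∧ j.val < h)) := by
    intro a j; rw [hH]; simp
  have hH0 : ∀ (a : Fin m) (j : Fin t), j.val = 0 →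
      ((((a, j) : Fin m × Fin t) ∈ H) ↔ a ∈ S) := by
    intro a j hj
    rw [hHmem]
    constructor
    · rintro (⟨hs, -⟩ | ⟨-, h1⟩ | ⟨hs, -⟩)
      · exact hs
      · omega
      · exact hs
    · intro hs; exact Or.inl ⟨hs, hj⟩
  have hHt : ∀ (a : Fin m) (j : Fin t), j.val = t - 1 →
      ((((a, j) : Fin m × Fin t) ∈ H) ↔ (a = w₁ ∨ a = w₃)) := by
    intro a j hj
    rw [hHmem]
    constructor
    · rintro (⟨-, h0⟩ | ⟨hx, -⟩ | ⟨-, -, -, -, hlt⟩)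
      · omega
      · exact hx
      · omega
    · intro hx; exact Or.inr (Or.inl ⟨hx, by omega⟩)
  have hHmid : ∀ (a : Fin m), a ∈ S → a ≠ w₁ → a ≠ w₃ → ∀ (j : Fin t),
      ((((a, j) : Fin m × Fin t) ∈ H) ↔ j.val < h) := by
    intro a haS ha1 ha3 j
    rw [hHmem]
    constructor
    · rintro (⟨-, h0⟩ | ⟨hx, -⟩ | ⟨-, -, -, -, hlt⟩)
      · omega
      · rcases hx with rfl | rfl
        · exact absurd rfl ha1
        · exact absurd rfl ha3
      · exact hlt
    · intro hj
      rcases Nat.eq_zero_or_pos j.val with h0 | h1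
      · exact Or.inl ⟨haS, h0⟩
      · exact Or.inr (Or.inr ⟨haS, ha1, ha3, h1, hj⟩)
  have hHw13 : ∀ (a : Fin m), (a = w₁ ∨ a = w₃) → ∀ (j : Fin t),
      ((a, j) : Fin m × Fin t) ∈ H := by
    intro a hx j
    rw [hHmem]
    rcases Nat.eq_zero_or_pos j.val with h0 | h1
    · refine Or.inl ⟨?_, h0⟩
      rcases hx with rfl | rfl
      exacts [hw1S, hw3S]
    · exact Or.inr (Or.inl ⟨hx, h1⟩)
  have hHout : ∀ (a : Fin m), a ∉ S → ∀ (j : Fin t),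
      ((a, j) : Fin m × Fin t) ∉ H := by
    intro a haS j hmem
    rw [hHmem] at hmem
    rcases hmem with ⟨hs, -⟩ | ⟨hx, -⟩ | ⟨hs, -⟩
    · exact haS hs
    · rcases hx with rfl | rfl
      exacts [haS hw1S, haS hw3S]
    · exact haS hs
  constructor
  · -- the handle count
    have hfilter : C.edges.toFinset.filter (crossing H) =
        ((M.filter (crossing S)).image
          (Sym2.map (fun a : Fin m => ((a, ⟨0, by omega⟩) : Fin m × Fin t)))) ∪
        ((S \ {w₁, w₃}).image (fun w : Fin m =>
          s(((w, ⟨h - 1, by omega⟩) : Fin m × Fin t), (w, ⟨h, by omega⟩)))) := by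
      ext e
      simp only [Finset.mem_filter, List.mem_toFinset, Finset.mem_union]
      constructor
      · rintro ⟨he, hcr⟩
        rcases subPrism_edge_cases ht (hedge he) with ⟨a, b, hab, rfl⟩ | ⟨a, b, hab, rfl⟩ |
          ⟨i, j, hj, rfl⟩
        · -- bottom edge
          left
          have hMab := hbot a b he
          rw [crossing_pair_iff, hH0 a _ rfl, hH0 b _ rfl] at hcr
          refine Finset.mem_image.mpr ⟨s(a, b), Finset.mem_filter.mpr ⟨hMab, ?_⟩,
            Sym2.map_pair_eq _ _ _⟩
          rw [crossing_pair_iff]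
          exact hcr
        · -- top edge: impossible
          exfalso
          rw [crossing_pair_iff, hHt a _ rfl, hHt b _ rfl] at hcr
          have key : ∀ x y : Fin m,
              s(((x, ⟨t - 1, by omega⟩) : Fin m × Fin t), (y, ⟨t - 1, by omega⟩)) ∈ C.edges →
              (x = w₁ ∨ x = w₃) → (y = w₁ ∨ y = w₃) := by
            intro x y hxyC hx
            rcases htopC _ hxyC x hx (by rw [Sym2.mem_iff]; left; rfl) with heq | heq
            · rcases Sym2.eq_iff.mp heq with ⟨-, h2⟩ | ⟨-, h2⟩
              · exact Or.inr (prodEq h2).1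
              · exact Or.inl (prodEq h2).1
            · rcases Sym2.eq_iff.mp heq with ⟨h1, -⟩ | ⟨-, h2⟩
              · have h' : t - 1 = t - 2 := (prodEq h1).2; omega
              · have h' : t - 1 = t - 2 := (prodEq h2).2; omega
          rcases hcr with ⟨hin, hout⟩
          rcases hin with hx | hx
          · have hb := key a b he hx
            tauto
          · have ha := key b a (by rwa [Sym2.eq_swap]) hx
            tauto
        · -- vertical edge
          right
          rw [crossing_pair_iff] at hcr
          by_cases hi13 : i = w₁ ∨ i = w₃
          · exfalso
            rcases hcr.2 with hni | hni
            exacts [hni (hHw13 i hi13 _), hni (hHw13 i hi13 _)]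
          by_cases hiS : i ∈ S
          · push_neg at hi13
            rw [hHmid i hiS hi13.1 hi13.2, hHmid i hiS hi13.1 hi13.2] at hcr
            have hin' : j < h ∨ j + 1 < h := hcr.1
            have hout' : ¬(j < h) ∨ ¬(j + 1 < h) := hcr.2
            refine Finset.mem_image.mpr ⟨i, Finset.mem_sdiff.mpr ⟨hiS, by
              simp only [Finset.mem_insert, Finset.mem_singleton]
              push_neg
              exact hi13⟩, ?_⟩
            rw [Sym2.eq_iff]
            left
            exact ⟨Prod.ext rfl (Fin.ext (show h - 1 = j by omega)),
              Prod.ext rfl (Fin.ext (show h = j + 1 by omega))⟩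
          · exfalso
            rcases hcr.1 with hni | hni
            exacts [hHout i hiS _ hni, hHout i hiS _ hni]
      · rintro (hmem | hmem)
        · obtain ⟨e', he', heq⟩ := Finset.mem_image.mp hmem
          obtain ⟨heM, hecr⟩ := Finset.mem_filter.mp he'
          subst heq
          revert heM hecr
          induction e' using Sym2.ind with
          | _ a b =>
            intro heM hecr
            rw [Sym2.map_pair_eq]
            refine ⟨hMb a b heM, ?_⟩
            rw [crossing_pair_iff] at hecr
            rw [crossing_pair_iff, hH0 a _ rfl, hH0 b _ rfl]
            exact hecr
        · obtain ⟨x, hx, heq⟩ := Finset.mem_image.mp hmem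
          subst heq
          rw [Finset.mem_sdiff] at hx
          obtain ⟨hxS, hx13⟩ := hx
          simp only [Finset.mem_insert, Finset.mem_singleton] at hx13
          push_neg at hx13
          refine ⟨hVert x (h - 1) h (by omega) (by omega) (by omega), ?_⟩
          rw [crossing_pair_iff, hHmid x hxS hx13.1 hx13.2, hHmid x hxS hx13.1 hx13.2]
          exact ⟨Or.inl (show h - 1 < h by omega), Or.inr (show ¬(h < h) by omega)⟩
    have hdisj : Disjoint
        ((M.filter (crossing S)).image
          (Sym2.map (fun a : Fin m => ((a, ⟨0, by omega⟩) : Fin m × Fin t))))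
        ((S \ {w₁, w₃}).image (fun w : Fin m =>
          s(((w, ⟨h - 1, by omega⟩) : Fin m × Fin t), (w, ⟨h, by omega⟩)))) := by
      rw [Finset.disjoint_left]
      intro e heA heB
      obtain ⟨e', he', heq⟩ := Finset.mem_image.mp heA
      obtain ⟨x, hx, heqB⟩ := Finset.mem_image.mp heB
      subst heq
      revert heqB
      induction e' using Sym2.ind with
      | _ a b =>
        intro heqB
        rw [Sym2.map_pair_eq] at heqB
        rcases Sym2.eq_iff.mp heqB with ⟨-, h2⟩ | ⟨-, h2⟩
        · have h' : h = 0 := (prodEq h2).2; omega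
        · have h' : h = 0 := (prodEq h2).2; omega
    rw [hfilter, Finset.card_union_of_disjoint hdisj,
      Finset.card_image_of_injective _ (Sym2.map.injective
        (fun a a' ha => (prodEq ha).1)),
      Finset.card_image_of_injective _ (show Function.Injective (fun w : Fin m =>
        s(((w, ⟨h - 1, by omega⟩) : Fin m × Fin t), (w, ⟨h, by omega⟩))) from ?_),
      Finset.card_sdiff_of_subset (by
        intro z hz
        simp only [Finset.mem_insert, Finset.mem_singleton] at hz
        rcases hz with rfl | rfl
        exacts [hw1S, hw3S]),
      Finset.card_pair hd13]
    intro x y hxy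
    rcases Sym2.eq_iff.mp hxy with ⟨h1, -⟩ | ⟨h1, -⟩
    · exact (prodEq h1).1
    · have h' : h - 1 = h := (prodEq h1).2; omega
  · intro w hw'
    rw [Finset.mem_sdiff] at hw'
    obtain ⟨hwS, hw13⟩ := hw'
    simp only [Finset.mem_insert, Finset.mem_singleton] at hw13
    push_neg at hw13
    obtain ⟨hww1, hww3⟩ := hw13
    have hTmem : ∀ pp : Fin m × Fin t, pp ∈ Tooth w ↔ pp.1 = w := by
      intro pp; rw [hTooth]; simp
    obtain ⟨p, hpw, hpM, hpuniq⟩ := hMpart w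
    have hvw : s(((w, ⟨t - 2, by omega⟩) : Fin m × Fin t), (w, ⟨t - 1, by omega⟩)) ∈ C.edges :=
      hVert w (t - 2) (t - 1) (by omega) (by omega) (by omega)
    obtain ⟨e₂, he₂, hxe₂, hne₂⟩ := cycle_exists_other hcyc (hsup ((w, ⟨t - 1, by omega⟩)))
      hvw (by rw [Sym2.mem_iff]; right; rfl)
    obtain ⟨y, hyw, rfl⟩ : ∃ y, y ≠ w ∧
        e₂ = s(((w, ⟨t - 1, by omega⟩) : Fin m × Fin t), (y, ⟨t - 1, by omega⟩)) := by
      rcases subPrism_edge_cases ht (hedge he₂) with ⟨a, b, hab, rfl⟩ | ⟨a, b, hab, rfl⟩ |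
        ⟨i, j, hj, rfl⟩
      · exfalso
        rcases Sym2.mem_iff.mp hxe₂ with h1 | h1
        · have h' : t - 1 = 0 := (prodEq h1).2; omega
        · have h' : t - 1 = 0 := (prodEq h1).2; omega
      · rcases Sym2.mem_iff.mp hxe₂ with h1 | h1
        · obtain rfl : w = a := (prodEq h1).1
          exact ⟨b, hab.symm, rfl⟩
        · obtain rfl : w = b := (prodEq h1).1
          exact ⟨a, hab, by rw [Sym2.eq_swap]⟩
      · exfalso
        rcases Sym2.mem_iff.mp hxe₂ with h1 | h1
        · have h' : t - 1 = j := (prodEq h1).2; omega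
        · obtain ⟨rfl, hj'⟩ : w = i ∧ t - 1 = j + 1 := prodEq h1
          apply hne₂
          rw [Sym2.eq_iff]
          left
          exact ⟨Prod.ext rfl (Fin.ext (show j = t - 2 by omega)),
            Prod.ext rfl (Fin.ext (show j + 1 = t - 1 by omega))⟩
    have hkey : C.edges.toFinset.filter (crossing (Tooth w)) =
        {s(((w, ⟨0, by omega⟩) : Fin m × Fin t), (p, ⟨0, by omega⟩)),
         s(((w, ⟨t - 1, by omega⟩) : Fin m × Fin t), (y, ⟨t - 1, by omega⟩))} := by
      ext e
      simp only [Finset.mem_filter, List.mem_toFinset, Finset.mem_insert, Finset.mem_singleton]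
      constructor
      · rintro ⟨he, hcr⟩
        rcases subPrism_edge_cases ht (hedge he) with ⟨a, b, hab, rfl⟩ | ⟨a, b, hab, rfl⟩ |
          ⟨i, j, hj, rfl⟩
        · left
          rw [crossing_pair_iff] at hcr
          have haw : a = w ∨ b = w := by
            rcases hcr.1 with hmem | hmem
            · exact Or.inl ((hTmem _).mp hmem)
            · exact Or.inr ((hTmem _).mp hmem)
          have hMab := hbot a b he
          rcases haw with rfl | rfl
          · have huq := hpuniq _ hMab (by rw [Sym2.mem_iff]; left; rfl)
            rcases Sym2.eq_iff.mp huq with ⟨-, h2⟩ | ⟨h1, -⟩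
            · subst h2
              rfl
            · exact absurd h1.symm hpw
          · have huq := hpuniq _ hMab (by rw [Sym2.mem_iff]; right; rfl)
            rcases Sym2.eq_iff.mp huq with ⟨h1, h2⟩ | ⟨h1, h2⟩
            · exact absurd h2.symm hpw
            · subst h1
              rw [Sym2.eq_swap]
        · right
          rw [crossing_pair_iff] at hcr
          have haw : a = w ∨ b = w := by
            rcases hcr.1 with hmem | hmem
            · exact Or.inl ((hTmem _).mp hmem)
            · exact Or.inr ((hTmem _).mp hmem)
          have hwe : ((w, ⟨t - 1, by omega⟩) : Fin m × Fin t) ∈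
              s(((a, ⟨t - 1, by omega⟩) : Fin m × Fin t), (b, ⟨t - 1, by omega⟩)) := by
            rcases haw with rfl | rfl
            · rw [Sym2.mem_iff]; left; rfl
            · rw [Sym2.mem_iff]; right; rfl
          rcases cycle_two_incident hcyc (hsup _) hvw he₂
              (by rw [Sym2.mem_iff]; right; rfl) hxe₂ (Ne.symm hne₂) _ he hwe with heq | heq
          · exfalso
            rcases Sym2.eq_iff.mp heq with ⟨h1, -⟩ | ⟨-, h2⟩
            · have h' : t - 1 = t - 2 := (prodEq h1).2; omega
            · have h' : t - 1 = t - 2 := (prodEq h2).2; omega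
          · exact heq
        · exfalso
          rw [crossing_pair_iff] at hcr
          have h1 : i = w := by
            rcases hcr.1 with hmem | hmem
            · exact (hTmem _).mp hmem
            · exact (hTmem _).mp hmem
          have h2 : ¬(i = w) := by
            rcases hcr.2 with hmem | hmem
            · exact fun hiw => hmem ((hTmem _).mpr hiw)
            · exact fun hiw => hmem ((hTmem _).mpr hiw)
          exact h2 h1
      · rintro (rfl | rfl)
        · refine ⟨hMb w p hpM, ?_⟩
          rw [crossing_pair_iff]
          exact ⟨Or.inl ((hTmem _).mpr rfl), Or.inr (fun hmem => hpw ((hTmem _).mp hmem))⟩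
        · refine ⟨he₂, ?_⟩
          rw [crossing_pair_iff]
          exact ⟨Or.inl ((hTmem _).mpr rfl), Or.inr (fun hmem => hyw ((hTmem _).mp hmem))⟩
    rw [hkey]
    rw [Finset.card_insert_of_notMem (by
      rw [Finset.mem_singleton]
      intro hcon
      rcases Sym2.eq_iff.mp hcon with ⟨h1, -⟩ | ⟨h1, -⟩
      · have h' : (0 : ℕ) = t - 1 := (prodEq h1).2; omega
      · have h' : (0 : ℕ) = t - 1 := (prodEq h1).2; omega), Finset.card_singleton]
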